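/- Let Λ < 0 and let g : ℝ → ℝ be C¹ with g(0) = 0, |g(ξ)|² ≤ C(1+|ξ|²) and ∫_ℝ |ξ g'(ξ)| dξ < ∞. Define c(ξ) = ∫_0^∞ g'(ξ + vΛ) e^{-v} dv and C(k) = ∫_{-∞}^k c(ξ) dξ. Then with M_k the modified Maxwellian, ∫_ℝ g'(ξ) M_k(ξ) dξ = C(k) for all k ∈ ℝ. -/

import Mathlib

open MeasureTheory Real Set

set_option maxHeartbeats 1000000

-- auxiliary: deriv g is integrable
lemma aux_f_int (f : ℝ → ℝ) (hfc : Continuous f)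
    (hmom : Integrable (fun ξ : ℝ => |ξ * f ξ|)) : Integrable f := by
  obtain ⟨Mc, hMc⟩ := isCompact_Icc.exists_bound_of_continuousOn
    (s := Icc (-1:ℝ) 1) hfc.continuousOn
  have hMc0 : 0 ≤ Mc := le_trans (norm_nonneg (f 0)) (hMc 0 (by norm_num))
  have hb : Integrable (fun ξ : ℝ => |ξ * f ξ| + (Icc (-1:ℝ) 1).indicator (fun _ => Mc) ξ) := by
    refine hmom.add ((integrable_indicator_iff measurableSet_Icc).2 ?_)
    exact integrableOn_const measure_Icc_lt_top.ne
  refine hb.mono' hfc.aestronglyMeasurable (Filter.Eventually.of_forall fun ξ => ?_)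
  by_cases h : ξ ∈ Icc (-1:ℝ) 1
  · calc ‖f ξ‖ ≤ Mc := hMc ξ h
      _ = 0 + Mc := by ring
      _ ≤ |ξ * f ξ| + (Icc (-1:ℝ) 1).indicator (fun _ => Mc) ξ := by
          rw [Set.indicator_of_mem h]
          exact add_le_add (abs_nonneg _) le_rfl
  · have h1 : 1 ≤ |ξ| := by
      rcases abs_cases ξ with ⟨he, _⟩ | ⟨he, _⟩ <;>
        simp only [mem_Icc, not_and_or, not_le] at h <;> rcases h with h | h <;> linarith
    calc ‖f ξ‖ = 1 * |f ξ| := (one_mul _).symm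
      _ ≤ |ξ| * |f ξ| := mul_le_mul_of_nonneg_right h1 (abs_nonneg _)
      _ = |ξ * f ξ| := (abs_mul ξ (f ξ)).symm
      _ ≤ |ξ * f ξ| + (Icc (-1:ℝ) 1).indicator (fun _ => Mc) ξ := by
          nlinarith [Set.indicator_nonneg (fun x _ => hMc0) ξ (s := Icc (-1:ℝ) 1)]

lemma aux_trans (f : ℝ → ℝ) (k a : ℝ) :
    ∫ ξ in Iio k, f (ξ + a) = ∫ ξ in Iio (k + a), f ξ := by
  rw [← integral_indicator measurableSet_Iio, ← integral_indicator measurableSet_Iio]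
  have h : ∀ ξ : ℝ, (Iio k).indicator (fun ξ => f (ξ + a)) ξ
      = (Iio (k + a)).indicator f (ξ + a) := by
    intro ξ
    by_cases h : ξ < k
    · rw [Set.indicator_of_mem (mem_Iio.2 h), Set.indicator_of_mem (mem_Iio.2 (by linarith : ξ + a < k + a))]
    · rw [Set.indicator_of_notMem (fun hc => h (mem_Iio.1 hc)),
        Set.indicator_of_notMem (fun hc => h (by have := mem_Iio.1 hc; linarith))]
  simp_rw [h]
  exact integral_add_right_eq_self ((Iio (k + a)).indicator f) a

theorem stmt_10 (Λ : ℝ) (hΛ : Λ < 0) (g : ℝ → ℝ) (Cg : ℝ)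
    (hg_diff : ContDiff ℝ 1 g)
    (hg0 : g 0 = 0)
    (hg_growth : ∀ ξ : ℝ, |g ξ| ^ 2 ≤ Cg * (1 + |ξ| ^ 2))
    (hg_mom : Integrable (fun ξ : ℝ => |ξ * deriv g ξ|))
    (M : ℝ → ℝ → ℝ)
    (hM : ∀ k ξ : ℝ, M k ξ =
      ∫ u in Ioi (0:ℝ), (if ξ - Λ * u < k then (1:ℝ) else 0) * Real.exp (-u))
    (c : ℝ → ℝ)
    (hc : ∀ ξ : ℝ, c ξ = ∫ v in Ioi (0:ℝ), deriv g (ξ + v * Λ) * Real.exp (-v))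
    (C : ℝ → ℝ)
    (hC : ∀ k : ℝ, C k = ∫ ξ in Iio k, c ξ) :
    ∀ k : ℝ, ∫ ξ : ℝ, deriv g ξ * M k ξ = C k := by
  intro k
  set f := deriv g with hf
  have hfc : Continuous f := (hg_diff.continuous_deriv le_rfl)
  have hfint : Integrable f := aux_f_int f hfc hg_mom
  have hexp : IntegrableOn (fun u : ℝ => Real.exp (-u)) (Ioi 0) := by
    simpa using exp_neg_integrableOn_Ioi 0 one_pos
  -- LHS
  have hLHS : ∫ ξ : ℝ, f ξ * M k ξ
      = ∫ u in Ioi (0:ℝ), Real.exp (-u) * ∫ ξ in Iio (k + Λ * u), f ξ := by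
    have hmeas : AEStronglyMeasurable
        (Function.uncurry fun ξ u => f ξ * ((if ξ - Λ * u < k then (1:ℝ) else 0) * Real.exp (-u)))
        (volume.prod (volume.restrict (Ioi 0))) := by
      apply Measurable.aestronglyMeasurable
      apply ((hfc.measurable.comp measurable_fst).mul _)
      exact (Measurable.ite
        (measurableSet_lt (measurable_fst.sub (measurable_snd.const_mul Λ)) measurable_const)
        measurable_const measurable_const).mul
        ((Real.measurable_exp.comp measurable_snd.neg))
    have hint : Integrable
        (Function.uncurry fun ξ u => f ξ * ((if ξ - Λ * u < k then (1:ℝ) else 0) * Real.exp (-u)))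
        (volume.prod (volume.restrict (Ioi 0))) := by
      refine Integrable.mono' (hfint.abs.mul_prod hexp) hmeas
        (Filter.Eventually.of_forall fun p => ?_)
      rcases p with ⟨ξ, u⟩
      simp only [Function.uncurry, norm_mul, Real.norm_eq_abs, abs_mul]
      by_cases h : ξ - Λ * u < k <;>
        simp [h, abs_of_nonneg (Real.exp_nonneg u), Real.exp_nonneg, abs_nonneg,
          mul_nonneg, abs_exp] <;>
        positivity
    calc ∫ ξ : ℝ, f ξ * M k ξ
        = ∫ ξ : ℝ, ∫ u in Ioi (0:ℝ),
            f ξ * ((if ξ - Λ * u < k then (1:ℝ) else 0) * Real.exp (-u)) := by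
          simp_rw [hM, ← integral_const_mul]
      _ = ∫ u in Ioi (0:ℝ), ∫ ξ : ℝ,
            f ξ * ((if ξ - Λ * u < k then (1:ℝ) else 0) * Real.exp (-u)) :=
          integral_integral_swap hint
      _ = ∫ u in Ioi (0:ℝ), Real.exp (-u) * ∫ ξ in Iio (k + Λ * u), f ξ := by
          apply setIntegral_congr_fun measurableSet_Ioi
          intro u _
          have h1 : ∀ ξ : ℝ, f ξ * ((if ξ - Λ * u < k then (1:ℝ) else 0) * Real.exp (-u))
              = Real.exp (-u) * (Iio (k + Λ * u)).indicator f ξ := by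
            intro ξ
            by_cases h : ξ - Λ * u < k
            · rw [if_pos h, Set.indicator_of_mem (mem_Iio.2 (by linarith [sub_lt_iff_lt_add.1 h]))]
              ring
            · rw [if_neg h, Set.indicator_of_notMem
                (fun hc => h (by have := mem_Iio.1 hc; linarith))]
              ring
          simp_rw [h1]
          rw [integral_const_mul, integral_indicator measurableSet_Iio]
  -- RHS
  have hRHS : C k = ∫ u in Ioi (0:ℝ), Real.exp (-u) * ∫ ξ in Iio (k + Λ * u), f ξ := by
    have hmeas2 : AEStronglyMeasurable
        (Function.uncurry fun u ξ => f (ξ + u * Λ) * Real.exp (-u))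
        ((volume.restrict (Ioi 0)).prod (volume.restrict (Iio k))) := by
      exact ((hfc.comp (continuous_snd.add (continuous_fst.mul continuous_const))).mul
        (Real.continuous_exp.comp continuous_fst.neg)).aestronglyMeasurable
    have hslice : ∀ u : ℝ, Integrable (fun ξ => f (ξ + u * Λ)) := by
      intro u
      exact ((measurePreserving_add_right volume (u * Λ)).integrable_comp
        hfc.aestronglyMeasurable).2 hfint
    have hint2 : Integrable
        (Function.uncurry fun u ξ => f (ξ + u * Λ) * Real.exp (-u))
        ((volume.restrict (Ioi 0)).prod (volume.restrict (Iio k))) := by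
      rw [integrable_prod_iff hmeas2]
      constructor
      · refine Filter.Eventually.of_forall fun u => ?_
        have : Integrable (fun ξ => f (ξ + u * Λ) * Real.exp (-u))
            (volume.restrict (Iio k)) := ((hslice u).mul_const _).restrict
        exact this
      · refine Integrable.mono' (hexp.mul_const (∫ ξ : ℝ, |f ξ|))
          (hmeas2.norm.integral_prod_right') (Filter.Eventually.of_forall fun u => ?_)
        simp only [Function.uncurry_apply_pair]
        have hnn : (0:ℝ) ≤ ∫ ξ in Iio k, ‖f (ξ + u * Λ) * Real.exp (-u)‖ :=
          integral_nonneg fun ξ => norm_nonneg _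
        rw [Real.norm_of_nonneg hnn]
        have h2 : ∀ ξ : ℝ, ‖f (ξ + u * Λ) * Real.exp (-u)‖
            = |f (ξ + u * Λ)| * Real.exp (-u) := by
          intro ξ
          rw [norm_mul, Real.norm_eq_abs, Real.norm_eq_abs, abs_exp]
        simp_rw [h2]
        rw [integral_mul_const, mul_comm]
        have hle : ∫ ξ in Iio k, |f (ξ + u * Λ)| ≤ ∫ ξ : ℝ, |f ξ| := by
          calc ∫ ξ in Iio k, |f (ξ + u * Λ)|
              ≤ ∫ ξ : ℝ, |f (ξ + u * Λ)| := setIntegral_le_integral (hslice u).abs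
                (Filter.Eventually.of_forall fun ξ => abs_nonneg _)
            _ = ∫ ξ : ℝ, |f ξ| := integral_add_right_eq_self (fun ξ => |f ξ|) (u * Λ)
        exact mul_le_mul_of_nonneg_left hle (Real.exp_nonneg _)
      -- done
    calc C k = ∫ ξ in Iio k, ∫ u in Ioi (0:ℝ), f (ξ + u * Λ) * Real.exp (-u) := by
          rw [hC]; exact setIntegral_congr_fun measurableSet_Iio fun ξ _ => hc ξ
      _ = ∫ u in Ioi (0:ℝ), ∫ ξ in Iio k, f (ξ + u * Λ) * Real.exp (-u) :=
          (integral_integral_swap hint2).symm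
      _ = ∫ u in Ioi (0:ℝ), Real.exp (-u) * ∫ ξ in Iio (k + Λ * u), f ξ := by
          apply setIntegral_congr_fun measurableSet_Ioi
          intro u _
          dsimp only
          rw [integral_mul_const, aux_trans f k (u * Λ), mul_comm Λ u]
          exact mul_comm _ _
  rw [hLHS, hRHS]
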